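/- Let f : ℝ^n → ℝ be μ-strongly convex, T : ℝ^n → ℝ^m linear with T*T positive definite, b ∈ ℝ^m, K ⊆ ℝ^m a regular closed convex cone; suppose the primal problem min{f(x) : Tx + b ∈ K} satisfies Slater's condition and has unique optimal solution x_opt. Let e ∈ int K and c_D > 0 be such that some dual optimal solution y satisfies ⟨e, y⟩ ≤ c_D, let h(y) := f*(T*y) + ⟨b,y⟩ and let d* be the dual optimal value. If y_k ∈ K* with ⟨e, y_k⟩ ≤ c_D and x_k := ∇f*(T* y_k), then for every k: ‖x_k − x_opt‖ ≤ sqrt(2‖T‖_op² / (μ · λ_min(T*T))) · sqrt(h(y_k) − d*), where λ_min(T*T) > 0 is the minimum eigenvalue of T*T. -/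

import Mathlib

set_option maxHeartbeats 1000000


open scoped RealInnerProductSpace

/-- The Fenchel conjugate `f*(s) = sup_x (⟨s,x⟩ - f(x))`. -/
noncomputable def fenchelConj {n : ℕ} (f : EuclideanSpace ℝ (Fin n) → ℝ)
    (s : EuclideanSpace ℝ (Fin n)) : ℝ :=
  ⨆ x, (⟪s, x⟫ - f x)

/-- The dual objective `h(y) = f*(T*y) + ⟨b,y⟩`. -/
noncomputable def dualObj {n m : ℕ} (f : EuclideanSpace ℝ (Fin n) → ℝ)
    (T : EuclideanSpace ℝ (Fin n) →L[ℝ] EuclideanSpace ℝ (Fin m))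
    (b y : EuclideanSpace ℝ (Fin m)) : ℝ :=
  fenchelConj f (ContinuousLinearMap.adjoint T y) + ⟪b, y⟫


lemma aux_theta_limit {a c d : ℝ} (h : ∀ θ : ℝ, 0 < θ → θ ≤ 1 → a ≤ c + θ * d) : a ≤ c := by
  refine le_of_forall_pos_le_add fun ε hε => ?_
  have hd1 : (0:ℝ) < |d| + 1 := by positivity
  set θ := min 1 (ε / (|d| + 1)) with hθdef
  have hθpos : 0 < θ := lt_min one_pos (by positivity)
  have h2 : θ * d ≤ θ * |d| := mul_le_mul_of_nonneg_left (le_abs_self d) hθpos.le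
  have h3 : θ ≤ ε / (|d| + 1) := min_le_right _ _
  have h4 : θ * |d| ≤ ε := by
    have h5 : θ * (|d| + 1) ≤ (ε / (|d| + 1)) * (|d| + 1) := mul_le_mul_of_nonneg_right h3 hd1.le
    have h6 : (ε / (|d| + 1)) * (|d| + 1) = ε := by field_simp
    nlinarith [abs_nonneg d]
  have := h θ hθpos (min_le_left _ _)
  linarith

section StrongConvex

variable {n : ℕ} (μ : ℝ) (hμ : 0 < μ) (f : EuclideanSpace ℝ (Fin n) → ℝ)
  (hf : ∀ x y : EuclideanSpace ℝ (Fin n), ∀ θ : ℝ, 0 ≤ θ → θ ≤ 1 →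
      f (θ • x + (1 - θ) • y)
        ≤ θ * f x + (1 - θ) * f y - μ / 2 * θ * (1 - θ) * ‖x - y‖ ^ 2)

include hμ hf

lemma aux_convexOn : ConvexOn ℝ Set.univ f := by
  refine ⟨convex_univ, fun x _ y _ a btmp ha hb hab => ?_⟩
  have hb' : btmp = 1 - a := by linarith
  subst hb'
  have := hf x y a ha (by linarith)
  simp only [smul_eq_mul]
  nlinarith [sq_nonneg ‖x - y‖, mul_nonneg (mul_nonneg (by linarith : (0:ℝ) ≤ μ/2) ha) hb]

lemma aux_cont : Continuous f := by
  have h := (aux_convexOn μ hμ f hf).continuousOn_interior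
  rw [interior_univ] at h
  exact continuousOn_univ.1 h

lemma aux_exists_max (s : EuclideanSpace ℝ (Fin n)) :
    ∃ z, ∀ x, ⟪s, x⟫ - f x ≤ ⟪s, z⟫ - f z := by
  set φ : EuclideanSpace ℝ (Fin n) → ℝ := fun x => ⟪s, x⟫ - f x with hφ
  have hcont : Continuous φ := (continuous_const.inner continuous_id).sub (aux_cont μ hμ f hf)
  obtain ⟨C, hC⟩ := (isCompact_closedBall (0:EuclideanSpace ℝ (Fin n)) 1).exists_bound_of_continuousOn
      ((aux_cont μ hμ f hf).continuousOn)
  have hmlb : ∀ u ∈ Metric.closedBall (0:EuclideanSpace ℝ (Fin n)) 1, -C ≤ f u := by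
    intro u hu
    have := hC u hu
    rw [Real.norm_eq_abs] at this
    linarith [(abs_le.1 this).1]
  -- quadratic growth of f
  have hgrow : ∀ x : EuclideanSpace ℝ (Fin n), 1 ≤ ‖x‖ →
      ‖x‖ * (-C - f 0) + f 0 + μ/2 * (‖x‖^2 - ‖x‖) ≤ f x := by
    intro x hx
    have hxpos : (0:ℝ) < ‖x‖ := by linarith
    set θ : ℝ := ‖x‖⁻¹ with hθdef
    have hθpos : 0 < θ := by positivity
    have hθx : θ * ‖x‖ = 1 := inv_mul_cancel₀ hxpos.ne'
    have hθ1 : θ ≤ 1 := by nlinarith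
    have h1 := hf x 0 θ hθpos.le hθ1
    simp only [smul_zero, add_zero, sub_zero] at h1
    have hnorm : ‖θ • x‖ = 1 := by
      rw [norm_smul, Real.norm_eq_abs, abs_of_pos hθpos, hθx]
    have hmem : θ • x ∈ Metric.closedBall (0:EuclideanSpace ℝ (Fin n)) 1 := by
      simp [Metric.mem_closedBall, dist_eq_norm, hnorm]
    have hml := hmlb _ hmem
    have key : -C ≤ θ * f x + (1 - θ) * f 0 - μ/2 * θ * (1-θ) * ‖x‖^2 := le_trans hml h1
    -- multiply by ‖x‖ > 0
    have e1 : θ * ‖x‖^2 = ‖x‖ := by rw [sq, ← mul_assoc, hθx, one_mul]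
    have key2 : -C * ‖x‖ ≤ f x + (‖x‖ - 1) * f 0 - μ/2 * (1-θ) * ‖x‖^2 := by
      have := mul_le_mul_of_nonneg_right key hxpos.le
      calc -C * ‖x‖ = -C * ‖x‖ := rfl
        _ ≤ (θ * f x + (1 - θ) * f 0 - μ/2 * θ * (1-θ) * ‖x‖^2) * ‖x‖ := this
        _ = (θ * ‖x‖) * f x + (‖x‖ - θ * ‖x‖) * f 0 - μ/2 * (1-θ) * (θ * ‖x‖) * ‖x‖^2 := by ring
        _ = f x + (‖x‖ - 1) * f 0 - μ/2 * (1-θ) * ‖x‖^2 := by rw [hθx]; ring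
    have e2 : (1 - θ) * ‖x‖^2 = ‖x‖^2 - ‖x‖ := by
      have : θ * ‖x‖^2 = ‖x‖ := e1
      nlinarith
    nlinarith
  -- coercivity: choose R
  set R : ℝ := max 1 ((|‖s‖ + C + f 0 + μ/2| + |f 0| + |φ 0| + 1) * (2/μ) + 1) with hR
  have hR1 : 1 ≤ R := le_max_left _ _
  have hfar : ∀ x : EuclideanSpace ℝ (Fin n), R < ‖x‖ → φ x < φ 0 := by
    intro x hxR
    have hx1 : 1 ≤ ‖x‖ := le_trans hR1 hxR.le
    have hg := hgrow x hx1
    have hs : ⟪s, x⟫ ≤ ‖s‖ * ‖x‖ := real_inner_le_norm s x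
    have hφx : φ x ≤ ‖s‖ * ‖x‖ - (‖x‖ * (-C - f 0) + f 0 + μ/2 * (‖x‖^2 - ‖x‖)) := by
      simp only [hφ]; linarith
    set D : ℝ := ‖s‖ + C + f 0 + μ/2 with hD
    have hφx2 : φ x ≤ ‖x‖ * D - f 0 - μ/2 * ‖x‖^2 := by
      calc φ x ≤ ‖s‖ * ‖x‖ - (‖x‖ * (-C - f 0) + f 0 + μ/2 * (‖x‖^2 - ‖x‖)) := hφx
        _ = ‖x‖ * D - f 0 - μ/2 * ‖x‖^2 := by rw [hD]; ring
    have hRx : (|D| + |f 0| + |φ 0| + 1) * (2/μ) + 1 < ‖x‖ := lt_of_le_of_lt (le_max_right _ _) hxR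
    have hmu2 : (0:ℝ) < μ/2 := by linarith
    -- ‖x‖ * D - μ/2 ‖x‖² < -|f 0| - |φ 0| … since ‖x‖ > (…)*(2/μ)
    have hDle : ‖x‖ * D ≤ ‖x‖ * |D| := mul_le_mul_of_nonneg_left (le_abs_self D) (by linarith)
    have hxbig : (|D| + |f 0| + |φ 0| + 1) < μ/2 * ‖x‖ := by
      have h7 : (|D| + |f 0| + |φ 0| + 1) * (2/μ) * (μ/2) = (|D| + |f 0| + |φ 0| + 1) := by
        field_simp
      nlinarith [abs_nonneg D, abs_nonneg (f 0), abs_nonneg (φ 0)]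
    have : ‖x‖ * (|D| + |f 0| + |φ 0| + 1) < ‖x‖ * (μ/2 * ‖x‖) :=
      mul_lt_mul_of_pos_left hxbig (by linarith)
    have hx0 : (0:ℝ) < ‖x‖ := by linarith
    have h8 : 1 * (|f 0| + |φ 0| + 1) ≤ ‖x‖ * (|f 0| + |φ 0| + 1) :=
      mul_le_mul_of_nonneg_right hx1 (by positivity)
    have e3 : ‖x‖ * (μ/2 * ‖x‖) = μ/2 * ‖x‖^2 := by ring
    have e4 : ‖x‖ * (|D| + |f 0| + |φ 0| + 1) = ‖x‖ * |D| + ‖x‖ * (|f 0| + |φ 0| + 1) := by ring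
    have h9 : ‖x‖ * |D| + ‖x‖ * (|f 0| + |φ 0| + 1) < μ/2 * ‖x‖^2 := by
      rw [← e4, ← e3]; exact this
    clear_value φ D
    have h10 : φ x < - f 0 - ‖x‖ * (|f 0| + |φ 0| + 1) := by linarith
    have h11 : (1:ℝ) * (|f 0| + |φ 0| + 1) = |f 0| + |φ 0| + 1 := by ring
    have h12 := neg_abs_le (f 0)
    have h13 := neg_abs_le (φ 0)
    linarith
  obtain ⟨z, hzmem, hz⟩ := (isCompact_closedBall (0:EuclideanSpace ℝ (Fin n)) R).exists_isMaxOn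
    ⟨0, by simp [Metric.mem_closedBall]; linarith⟩ hcont.continuousOn
  refine ⟨z, fun x => ?_⟩
  rcases le_or_gt ‖x‖ R with hle | hgt
  · exact hz (by simp [Metric.mem_closedBall, dist_eq_norm, hle])
  · have h0 : φ 0 ≤ φ z := hz (by simp [Metric.mem_closedBall]; linarith)
    exact le_trans (hfar x hgt).le h0


/-- Lemma A: strong maximizer inequality. -/
lemma aux_max_strong (s : EuclideanSpace ℝ (Fin n)) (z : EuclideanSpace ℝ (Fin n))
    (hz : ∀ x, ⟪s, x⟫ - f x ≤ ⟪s, z⟫ - f z) :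
    ∀ x, ⟪s, x⟫ - f x + μ/2 * ‖x - z‖^2 ≤ ⟪s, z⟫ - f z := by
  intro x
  have key : ∀ θ : ℝ, 0 < θ → θ ≤ 1 →
      ⟪s, x⟫ - f x + μ/2 * ‖x - z‖^2 ≤ (⟪s, z⟫ - f z) + θ * (μ/2 * ‖x - z‖^2) := by
    intro θ hθ hθ1
    have h1 := hf x z θ hθ.le hθ1
    have hin : ⟪s, θ • x + (1 - θ) • z⟫ = θ * ⟪s, x⟫ + (1 - θ) * ⟪s, z⟫ := by
      rw [inner_add_right, real_inner_smul_right, real_inner_smul_right]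
    have h2 := hz (θ • x + (1 - θ) • z)
    rw [hin] at h2
    -- θ⟪s,x⟫ + (1-θ)⟪s,z⟫ - f(combo) ≤ ⟪s,z⟫ - f z, and f(combo) ≤ …
    have h3 : θ * ⟪s, x⟫ + (1 - θ) * ⟪s, z⟫ - (θ * f x + (1 - θ) * f z - μ/2 * θ * (1-θ) * ‖x - z‖^2)
        ≤ ⟪s, z⟫ - f z := le_trans (by linarith) h2
    -- divide by θ
    have h4 : θ * (⟪s, x⟫ - f x + μ/2 * (1-θ) * ‖x - z‖^2) ≤ θ * (⟪s, z⟫ - f z) := by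
      nlinarith
    have h5 := le_of_mul_le_mul_left (by linarith [h4] : θ * (⟪s, x⟫ - f x + μ/2 * (1-θ) * ‖x - z‖^2) ≤ θ * (⟪s, z⟫ - f z)) hθ
    nlinarith
  exact aux_theta_limit key

/-- value of the conjugate at a maximizer. -/
lemma aux_fenchel_eq (s : EuclideanSpace ℝ (Fin n)) (z : EuclideanSpace ℝ (Fin n))
    (hz : ∀ x, ⟪s, x⟫ - f x ≤ ⟪s, z⟫ - f z) :
    fenchelConj f s = ⟪s, z⟫ - f z := by
  refine le_antisymm (ciSup_le hz) ?_
  exact le_ciSup ⟨⟪s, z⟫ - f z, Set.forall_mem_range.2 hz⟩ z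

lemma aux_fenchel_lb (s : EuclideanSpace ℝ (Fin n)) (x : EuclideanSpace ℝ (Fin n)) :
    ⟪s, x⟫ - f x ≤ fenchelConj f s := by
  obtain ⟨z, hz⟩ := aux_exists_max μ hμ f hf s
  rw [aux_fenchel_eq μ hμ f hf s z hz]
  exact hz x

lemma aux_hasGradient (s : EuclideanSpace ℝ (Fin n)) (z : EuclideanSpace ℝ (Fin n))
    (hz : ∀ x, ⟪s, x⟫ - f x ≤ ⟪s, z⟫ - f z) :
    HasGradientAt (fenchelConj f) z s := by
  have hval := aux_fenchel_eq μ hμ f hf s z hz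
  -- two-sided bounds
  have hlow : ∀ t, fenchelConj f s + ⟪z, t - s⟫ ≤ fenchelConj f t := by
    intro t
    have hlb := aux_fenchel_lb μ hμ f hf t z
    have e : ⟪z, t - s⟫ = ⟪t, z⟫ - ⟪s, z⟫ := by
      rw [inner_sub_right, real_inner_comm z t, real_inner_comm z s]
    rw [hval, e]; linarith
  have hup : ∀ t, fenchelConj f t ≤ fenchelConj f s + ⟪z, t - s⟫ + (1/(2*μ)) * ‖t - s‖^2 := by
    intro t
    obtain ⟨w, hw⟩ := aux_exists_max μ hμ f hf t
    have hvalt := aux_fenchel_eq μ hμ f hf t w hw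
    have hA := aux_max_strong μ hμ f hf s z hz w
    -- ⟪t,w⟫ - f w = ⟪s,w⟫ - f w + ⟪t-s, w⟫
    have a1 : ⟪t - s, z⟫ = ⟪t, z⟫ - ⟪s, z⟫ := by rw [inner_sub_left]
    have a2 : ⟪t - s, w - z⟫ = ⟪t, w⟫ - ⟪t, z⟫ - ⟪s, w⟫ + ⟪s, z⟫ := by
      rw [inner_sub_left, inner_sub_right, inner_sub_right]; ring
    have e1 : ⟪t, w⟫ - f w = (⟪s, w⟫ - f w) + ⟪t - s, z⟫ + ⟪t - s, w - z⟫ := by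
      rw [a1, a2]; ring
    have e2 : ⟪t - s, w - z⟫ ≤ ‖t - s‖ * ‖w - z‖ := real_inner_le_norm _ _
    have e3 : ‖t - s‖ * ‖w - z‖ ≤ μ/2 * ‖w - z‖^2 + (1/(2*μ)) * ‖t - s‖^2 := by
      have h := sq_nonneg (‖t - s‖ - μ * ‖w - z‖)
      have h2 : (0:ℝ) < 2*μ := by linarith
      rw [← mul_le_mul_iff_right₀ h2]
      have expand : 2*μ*(μ/2 * ‖w - z‖^2 + (1/(2*μ)) * ‖t - s‖^2)
          = μ^2*‖w - z‖^2 + ‖t - s‖^2 := by field_simp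
      rw [expand]; nlinarith
    have e4 : ⟪t - s, z⟫ = ⟪z, t - s⟫ := real_inner_comm _ _
    rw [hvalt, hval]
    linarith [hA, e1, e2, e3, e4]
  -- conclude differentiability
  rw [hasGradientAt_iff_hasFDerivAt, hasFDerivAt_iff_isLittleO_nhds_zero]
  rw [Asymptotics.isLittleO_iff]
  intro c hc
  have h2μ : (0:ℝ) < 1/(2*μ) := by positivity
  filter_upwards [Metric.ball_mem_nhds (0 : EuclideanSpace ℝ (Fin n)) (show 0 < c * (2*μ) by positivity)] with v hv
  have hvn : ‖v‖ < c * (2*μ) := by simpa [dist_eq_norm] using hv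
  have hl := hlow (s + v)
  have hu := hup (s + v)
  simp only [add_sub_cancel_left] at hl hu
  have htd : (InnerProductSpace.toDual ℝ (EuclideanSpace ℝ (Fin n)) z) v = ⟪z, v⟫ := rfl
  rw [Real.norm_eq_abs, abs_le]
  constructor
  · simp only [htd]; nlinarith [norm_nonneg v]
  · simp only [htd]
    have : fenchelConj f (s + v) - fenchelConj f s - ⟪z, v⟫ ≤ (1/(2*μ)) * ‖v‖^2 := by linarith
    have h3 : (1/(2*μ)) * ‖v‖^2 ≤ c * ‖v‖ := by
      rcases eq_or_lt_of_le (norm_nonneg v) with h0 | h0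
      · rw [← h0]; simp
      · have : ‖v‖ * ‖v‖ < ‖v‖ * (c * (2*μ)) := mul_lt_mul_of_pos_left hvn h0
        rw [sq]
        calc (1/(2*μ)) * (‖v‖ * ‖v‖) ≤ (1/(2*μ)) * (‖v‖ * (c * (2*μ))) := by
              exact mul_le_mul_of_nonneg_left this.le h2μ.le
          _ = c * ‖v‖ := by field_simp
    linarith

end StrongConvex

lemma aux_strong_duality {n m : ℕ}
    (f : EuclideanSpace ℝ (Fin n) → ℝ) (hconvf : ConvexOn ℝ Set.univ f)
    (T : EuclideanSpace ℝ (Fin n) →L[ℝ] EuclideanSpace ℝ (Fin m))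
    (b : EuclideanSpace ℝ (Fin m)) (K : Set (EuclideanSpace ℝ (Fin m)))
    (hconv : Convex ℝ K)
    (hcone : ∀ (c : ℝ), 0 ≤ c → ∀ x ∈ K, c • x ∈ K)
    (hslater : ∃ xbar : EuclideanSpace ℝ (Fin n), T xbar + b ∈ interior K)
    (xopt : EuclideanSpace ℝ (Fin n))
    (hxmin : ∀ x : EuclideanSpace ℝ (Fin n), T x + b ∈ K → f xopt ≤ f x) :
    ∃ yh, (∀ x ∈ K, 0 ≤ ⟪x, yh⟫) ∧ dualObj f T b yh ≤ -(f xopt) := by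
  obtain ⟨xbar, hxbar⟩ := hslater
  classical
  set A : Set (EuclideanSpace ℝ (Fin m) × ℝ) :=
    {p | ∃ x, f x < p.2 ∧ T x + b + p.1 ∈ K} with hA
  -- A is convex
  have hAconv : Convex ℝ A := by
    rintro p ⟨x1, hx1, hK1⟩ q ⟨x2, hx2, hK2⟩ a c ha hc hac
    refine ⟨a • x1 + c • x2, ?_, ?_⟩
    · have h1 := hconvf.2 (Set.mem_univ x1) (Set.mem_univ x2) ha hc hac
      have h2 : a * f x1 + c * f x2 < a * p.2 + c * q.2 := by
        rcases eq_or_lt_of_le ha with ha0 | ha0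
        · simp only [← ha0, zero_mul, zero_add]
          have hc1 : c = 1 := by linarith
          rw [hc1]; simpa using hx2
        · have := mul_lt_mul_of_pos_left hx1 ha0
          have h3 : c * f x2 ≤ c * q.2 := mul_le_mul_of_nonneg_left hx2.le hc
          linarith
      simp only [smul_eq_mul] at h1
      show f (a • x1 + c • x2) < (a • p + c • q).2
      have he : (a • p + c • q).2 = a * p.2 + c * q.2 := rfl
      rw [he]
      exact lt_of_le_of_lt h1 h2
    · show T (a • x1 + c • x2) + b + (a • p + c • q).1 ∈ K
      have h1 : (a • p + c • q).1 = a • p.1 + c • q.1 := rfl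
      have hb : a • b + c • b = b := by rw [← add_smul, hac, one_smul]
      have h2 : T (a • x1 + c • x2) + b + (a • p.1 + c • q.1)
          = a • (T x1 + b + p.1) + c • (T x2 + b + q.1) := by
        rw [map_add, map_smul, map_smul, smul_add, smul_add, smul_add, smul_add]
        nth_rewrite 1 [← hb]
        abel
      rw [h1, h2]
      exact hconv hK1 hK2 ha hc hac
  -- the point to separate
  set x₀ : EuclideanSpace ℝ (Fin m) × ℝ := (0, f xopt) with hx₀def
  have hx₀A : x₀ ∉ A := by
    rintro ⟨x, hfx, hxK⟩
    rw [hx₀def] at hfx hxK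
    simp only [add_zero] at hxK
    exact absurd (hxmin x hxK) (by simpa using not_le.2 hfx)
  -- interior of A is nonempty
  have hw₀ : ((0 : EuclideanSpace ℝ (Fin m)), f xbar + 1) ∈ interior A := by
    rw [mem_interior]
    refine ⟨{p : EuclideanSpace ℝ (Fin m) × ℝ | T xbar + b + p.1 ∈ interior K ∧ f xbar < p.2},
      ?_, ?_, ?_⟩
    · rintro p ⟨h1, h2⟩; exact ⟨xbar, h2, interior_subset h1⟩
    · have hopen : {p : EuclideanSpace ℝ (Fin m) × ℝ | T xbar + b + p.1 ∈ interior K ∧ f xbar < p.2}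
          = ((fun p : EuclideanSpace ℝ (Fin m) × ℝ => T xbar + b + p.1) ⁻¹' interior K)
            ∩ (Prod.snd ⁻¹' Set.Ioi (f xbar)) := rfl
      rw [hopen]
      exact (isOpen_interior.preimage (continuous_const.add continuous_fst)).inter
        (isOpen_Ioi.preimage continuous_snd)
    · exact ⟨by simpa using hxbar, by norm_num⟩
  -- separation
  have hx₀int : x₀ ∉ interior A := fun h => hx₀A (interior_subset h)
  obtain ⟨ℓ, hℓ⟩ := geometric_hahn_banach_open_point (hAconv.interior) isOpen_interior hx₀int
  -- extend the inequality to all of A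
  have hℓA : ∀ p ∈ A, ℓ p ≤ ℓ x₀ := by
    intro p hp
    have key : ∀ θ : ℝ, 0 < θ → θ ≤ 1 → ℓ p ≤ ℓ x₀ + θ * (ℓ p - ℓ ((0 : EuclideanSpace ℝ (Fin m)), f xbar + 1)) := by
      intro θ hθ hθ1
      have hmem : θ • ((0 : EuclideanSpace ℝ (Fin m)), f xbar + 1) + (1 - θ) • p ∈ interior A :=
        hAconv.combo_interior_closure_mem_interior hw₀ (subset_closure hp) hθ (by linarith) (by ring)
      have := hℓ _ hmem
      rw [map_add, map_smul, map_smul, smul_eq_mul, smul_eq_mul] at this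
      nlinarith
    exact aux_theta_limit key
  -- decompose ℓ
  set α : ℝ := ℓ (0, 1) with hα
  set ψ : EuclideanSpace ℝ (Fin m) →L[ℝ] ℝ :=
    ℓ.comp (ContinuousLinearMap.inl ℝ (EuclideanSpace ℝ (Fin m)) ℝ) with hψ
  have hψval : ∀ u : EuclideanSpace ℝ (Fin m), ψ u = ℓ (u, 0) := fun u => rfl
  have hdecomp : ∀ (u : EuclideanSpace ℝ (Fin m)) (r : ℝ), ℓ (u, r) = ψ u + r * α := by
    intro u r
    have he : (u, r) = ((u, (0:ℝ)) : EuclideanSpace ℝ (Fin m) × ℝ)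
        + r • (((0 : EuclideanSpace ℝ (Fin m)), (1:ℝ))) := by
      simp [Prod.ext_iff]
    rw [he, map_add, map_smul, smul_eq_mul, hψval]
  have hℓx₀ : ℓ x₀ = f xopt * α := by
    rw [hx₀def, hdecomp, map_zero]; ring
  -- F1
  have hF1 : ∀ (x : EuclideanSpace ℝ (Fin n)) (z : EuclideanSpace ℝ (Fin m)) (r : ℝ),
      z ∈ K → f x < r → ψ (z - (T x + b)) + r * α ≤ f xopt * α := by
    intro x z r hz hr
    have hmemA : ((z - (T x + b), r) : EuclideanSpace ℝ (Fin m) × ℝ) ∈ A := by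
      refine ⟨x, hr, ?_⟩
      have : T x + b + (z - (T x + b)) = z := by abel
      rw [this]; exact hz
    have := hℓA _ hmemA
    rw [hdecomp, hℓx₀] at this
    exact this
  have hfeasbar : T xbar + b ∈ K := interior_subset hxbar
  have h0K : (0 : EuclideanSpace ℝ (Fin m)) ∈ K := by
    have := hcone 0 le_rfl _ hfeasbar
    rwa [zero_smul] at this
  -- α ≤ 0
  have hαle : α ≤ 0 := by
    by_contra hpos
    push_neg at hpos
    set r : ℝ := max (f xbar + 1) (f xopt + 1) with hr
    have h1 : f xbar < r := lt_of_lt_of_le (by linarith) (le_max_left _ _)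
    have h2 := hF1 xbar (T xbar + b) r hfeasbar h1
    rw [sub_self, map_zero, zero_add] at h2
    have h3 : f xopt < r := lt_of_lt_of_le (by linarith) (le_max_right _ _)
    have := mul_lt_mul_of_pos_right h3 hpos
    linarith
  -- F3
  have hF3 : ∀ (x : EuclideanSpace ℝ (Fin n)) (z : EuclideanSpace ℝ (Fin m)), z ∈ K →
      ψ z - ψ (T x + b) + f x * α ≤ f xopt * α := by
    intro x z hz
    refine aux_theta_limit (d := -α) fun θ hθ hθ1 => ?_
    have h1 := hF1 x z (f x + θ) hz (by linarith)
    rw [map_sub] at h1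
    linarith
  -- F4 : ψ ≤ 0 on K
  have hF4 : ∀ z ∈ K, ψ z ≤ 0 := by
    intro z hz
    by_contra hpos
    push_neg at hpos
    set M : ℝ := f xopt * α - f xbar * α + ψ (T xbar + b) with hM
    have hbound : ∀ c : ℝ, 0 ≤ c → c * ψ z ≤ M := by
      intro c hc
      have := hF3 xbar (c • z) (hcone c hc z hz)
      rw [map_smul, smul_eq_mul] at this
      linarith
    have := hbound ((|M| + 1)/ψ z) (by positivity)
    rw [div_mul_cancel₀ _ hpos.ne'] at this
    linarith [le_abs_self M]
  -- rule out α = 0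
  have hαlt : α < 0 := by
    rcases lt_or_eq_of_le hαle with h | h
    · exact h
    · exfalso
      -- α = 0 : show ψ = 0 and contradict strict separation
      have hα0 : α = 0 := h
      have hψpos : ∀ x : EuclideanSpace ℝ (Fin n), 0 ≤ ψ (T x + b) := by
        intro x
        have := hF3 x 0 h0K
        rw [map_zero, hα0] at this
        linarith
      have hψw : ψ (T xbar + b) = 0 :=
        le_antisymm (hF4 _ hfeasbar) (hψpos xbar)
      obtain ⟨ε, hε, hball⟩ := Metric.mem_nhds_iff.1 (mem_interior_iff_mem_nhds.1 hxbar)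
      have hψzero : ∀ v : EuclideanSpace ℝ (Fin m), ψ v ≤ 0 := by
        intro v
        set δ : ℝ := ε / (2 * (‖v‖ + 1)) with hδ
        have hδpos : 0 < δ := by positivity
        have hmem : T xbar + b + δ • v ∈ K := by
          apply hball
          rw [Metric.mem_ball, dist_eq_norm]
          have : T xbar + b + δ • v - (T xbar + b) = δ • v := by abel
          rw [this, norm_smul, Real.norm_eq_abs, abs_of_pos hδpos]
          have h9 : δ * ‖v‖ ≤ δ * (‖v‖ + 1) := by nlinarith [norm_nonneg v]
          have h10 : δ * (‖v‖ + 1) = ε / 2 := by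
            rw [hδ]; field_simp
          linarith
        have := hF4 _ hmem
        rw [map_add, map_add, map_smul, smul_eq_mul] at this
        have hψw' : ψ (T xbar) + ψ b = 0 := by rw [← map_add]; exact hψw
        nlinarith
      have hψzero' : ∀ v : EuclideanSpace ℝ (Fin m), ψ v = 0 := by
        intro v
        have h1 := hψzero v
        have h2 := hψzero (-v)
        rw [map_neg] at h2
        linarith
      have hcontr := hℓ _ hw₀
      rw [hdecomp, hℓx₀, hψzero', hα0] at hcontr
      simp at hcontr
  -- construct the dual optimal vector
  set β : ℝ := -α with hβ
  have hβpos : 0 < β := by rw [hβ]; linarith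
  set v0 : EuclideanSpace ℝ (Fin m) :=
    (InnerProductSpace.toDual ℝ (EuclideanSpace ℝ (Fin m))).symm
      (ψ : StrongDual ℝ (EuclideanSpace ℝ (Fin m))) with hv0
  have hv0val : ∀ u, ⟪v0, u⟫ = ψ u := fun u => InnerProductSpace.toDual_symm_apply
  set yh : EuclideanSpace ℝ (Fin m) := -(β⁻¹) • v0 with hyh
  have hyhval : ∀ u, ⟪u, yh⟫ = -(β⁻¹) * ψ u := by
    intro u
    rw [hyh, real_inner_smul_right, real_inner_comm, hv0val]
  refine ⟨yh, fun z hz => ?_, ?_⟩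
  · rw [hyhval]
    have := hF4 z hz
    have hβinv : 0 < β⁻¹ := by positivity
    nlinarith
  · rw [dualObj]
    have hkey : ∀ x : EuclideanSpace ℝ (Fin n),
        ⟪ContinuousLinearMap.adjoint T yh, x⟫ - f x ≤ -(f xopt) - ⟪b, yh⟫ := by
      intro x
      rw [ContinuousLinearMap.adjoint_inner_left]
      have g2' : ⟪yh, T x⟫ = ⟪T x, yh⟫ := real_inner_comm _ _
      have g2 : ⟪T x, yh⟫ = -β⁻¹ * ψ (T x) := hyhval (T x)
      have g3 : ⟪b, yh⟫ = -β⁻¹ * ψ b := hyhval b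
      have h1 := hF3 x 0 h0K
      rw [map_zero] at h1
      -- h1 : 0 - ψ (T x + b) + f x * α ≤ f xopt * α, with α = -β
      have h2 : ψ (T x + b) = ψ (T x) + ψ b := by rw [map_add]
      have hαβ : α = -β := by rw [hβ]; ring
      rw [hαβ] at h1
      -- -ψ(Tx+b) - f x * β ≤ - f xopt * β; multiply by β⁻¹
      have h3 : β⁻¹ * (-ψ (T x + b) - f x * β) ≤ β⁻¹ * (-(f xopt) * β) := by
        apply mul_le_mul_of_nonneg_left _ (by positivity)
        linarith
      have h4 : β⁻¹ * β = 1 := inv_mul_cancel₀ hβpos.ne'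
      have h5 : β⁻¹ * (-ψ (T x + b)) - f x ≤ -(f xopt) := by
        have e1 : β⁻¹ * (-ψ (T x + b) - f x * β) = β⁻¹ * (-ψ (T x + b)) - f x * (β⁻¹ * β) := by ring
        have e2 : β⁻¹ * (-(f xopt) * β) = -(f xopt) * (β⁻¹ * β) := by ring
        rw [e1, e2, h4] at h3
        linarith
      rw [h2] at h5
      have e3 : β⁻¹ * (-(ψ (T x) + ψ b)) = -β⁻¹ * ψ (T x) + (-β⁻¹ * ψ b) := by ring
      rw [e3] at h5
      linarith
    have hsup : fenchelConj f (ContinuousLinearMap.adjoint T yh) ≤ -(f xopt) - ⟪b, yh⟫ :=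
      ciSup_le hkey
    linarith

/-- Rate of convergence: under the assumptions of Statement 16 and
with `T*T` positive definite (with minimum eigenvalue `lam > 0`, characterized as the
greatest constant with `lam ‖v‖² ≤ ⟨T*T v, v⟩`), every dual-feasible `y_k` with
`⟨e,y_k⟩ ≤ c_D` and `x_k = ∇f*(T* y_k)` satisfies
`‖x_k - x_opt‖ ≤ sqrt(2‖T‖² / (μ lam)) · sqrt(h(y_k) - d*)`. -/

theorem stmt_17 {n m : ℕ} (μ : ℝ) (hμ : 0 < μ)
    (f : EuclideanSpace ℝ (Fin n) → ℝ)
    (hf : ∀ x y : EuclideanSpace ℝ (Fin n), ∀ θ : ℝ, 0 ≤ θ → θ ≤ 1 →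
      f (θ • x + (1 - θ) • y)
        ≤ θ * f x + (1 - θ) * f y - μ / 2 * θ * (1 - θ) * ‖x - y‖ ^ 2)
    (T : EuclideanSpace ℝ (Fin n) →L[ℝ] EuclideanSpace ℝ (Fin m))
    (hTT : ∀ v : EuclideanSpace ℝ (Fin n), v ≠ 0 →
      0 < ⟪ContinuousLinearMap.adjoint T (T v), v⟫)
    (lam : ℝ) (hlampos : 0 < lam)
    (hlam : IsGreatest {c : ℝ | ∀ v : EuclideanSpace ℝ (Fin n),
      c * ‖v‖ ^ 2 ≤ ⟪ContinuousLinearMap.adjoint T (T v), v⟫} lam)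
    (b : EuclideanSpace ℝ (Fin m)) (K : Set (EuclideanSpace ℝ (Fin m)))
    (hclosed : IsClosed K) (hconv : Convex ℝ K)
    (hcone : ∀ (c : ℝ), 0 ≤ c → ∀ x ∈ K, c • x ∈ K)
    (hpointed : K ∩ (-K) = {0}) (hfull : (interior K).Nonempty)
    (hslater : ∃ xbar : EuclideanSpace ℝ (Fin n), T xbar + b ∈ interior K)
    (xopt : EuclideanSpace ℝ (Fin n))
    (hxfeas : T xopt + b ∈ K)
    (hxmin : ∀ x : EuclideanSpace ℝ (Fin n), T x + b ∈ K → f xopt ≤ f x)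
    (e : EuclideanSpace ℝ (Fin m)) (he : e ∈ interior K)
    (cD : ℝ) (hcD : 0 < cD)
    (yopt : EuclideanSpace ℝ (Fin m))
    (hyoptK : ∀ x ∈ K, 0 ≤ ⟪x, yopt⟫)
    (hyoptmin : ∀ y : EuclideanSpace ℝ (Fin m), (∀ x ∈ K, 0 ≤ ⟪x, y⟫) →
      dualObj f T b yopt ≤ dualObj f T b y)
    (hyoptcd : ⟪e, yopt⟫ ≤ cD)
    (y : ℕ → EuclideanSpace ℝ (Fin m))
    (hyK : ∀ k, (∀ x ∈ K, 0 ≤ ⟪x, y k⟫) ∧ ⟪e, y k⟫ ≤ cD) :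
    ∀ k : ℕ,
      ‖gradient (fenchelConj f) (ContinuousLinearMap.adjoint T (y k)) - xopt‖
        ≤ Real.sqrt (2 * ‖T‖ ^ 2 / (μ * lam)) *
          Real.sqrt (dualObj f T b (y k) - dualObj f T b yopt) := by
  -- lam ≤ ‖T‖²
  have hlamT : lam ≤ ‖T‖ ^ 2 := by
    rcases Nat.eq_zero_or_pos n with hn | hn
    · exfalso
      have hsub : ∀ v : EuclideanSpace ℝ (Fin n), v = 0 := by
        intro v
        subst hn
        exact Subsingleton.elim v 0
      have h1 : lam + 1 ≤ lam := hlam.2 (fun v => by simp [hsub v])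
      linarith
    · set v : EuclideanSpace ℝ (Fin n) := EuclideanSpace.single ⟨0, hn⟩ 1 with hv
      have hvn : ‖v‖ = 1 := by rw [hv, EuclideanSpace.norm_single]; norm_num
      have h1 := hlam.1 v
      rw [ContinuousLinearMap.adjoint_inner_left, real_inner_self_eq_norm_sq, hvn] at h1
      have h2 : ‖T v‖ ≤ ‖T‖ * ‖v‖ := T.le_opNorm v
      rw [hvn, mul_one] at h2
      nlinarith [norm_nonneg (T v), norm_nonneg T]
  -- strong duality
  have hconvf := aux_convexOn μ hμ f hf
  obtain ⟨yh, hyhfeas, hyhval⟩ :=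
    aux_strong_duality f hconvf T b K hconv hcone hslater xopt hxmin
  have hdopt : dualObj f T b yopt ≤ -(f xopt) := le_trans (hyoptmin yh hyhfeas) hyhval
  intro k
  set s : EuclideanSpace ℝ (Fin n) := ContinuousLinearMap.adjoint T (y k) with hs
  obtain ⟨z, hz⟩ := aux_exists_max μ hμ f hf s
  have hgrad : gradient (fenchelConj f) s = z :=
    (aux_hasGradient μ hμ f hf s z hz).gradient
  rw [hgrad]
  have hval := aux_fenchel_eq μ hμ f hf s z hz
  have hA := aux_max_strong μ hμ f hf s z hz xopt
  have hip : ⟪s, xopt⟫ = ⟪y k, T xopt⟫ :=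
    ContinuousLinearMap.adjoint_inner_left T xopt (y k)
  have hpos : 0 ≤ ⟪T xopt + b, y k⟫ := (hyK k).1 _ hxfeas
  have hsplit : ⟪T xopt + b, y k⟫ = ⟪T xopt, y k⟫ + ⟪b, y k⟫ := inner_add_left _ _ _
  have hcomm : ⟪y k, T xopt⟫ = ⟪T xopt, y k⟫ := real_inner_comm _ _
  have h1 : dualObj f T b (y k) = (⟪s, z⟫ - f z) + ⟪b, y k⟫ := by
    rw [dualObj, ← hs, hval]
  have hgap : μ/2 * ‖xopt - z‖ ^ 2 ≤ dualObj f T b (y k) - dualObj f T b yopt := by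
    linarith
  set G : ℝ := dualObj f T b (y k) - dualObj f T b yopt with hG
  have hGnn : 0 ≤ G := le_trans (by positivity) hgap
  have hnrev : ‖z - xopt‖ = ‖xopt - z‖ := norm_sub_rev _ _
  have hd2 : ‖z - xopt‖ ^ 2 ≤ (2 * ‖T‖ ^ 2 / (μ * lam)) * G := by
    have hstep1 : ‖z - xopt‖ ^ 2 ≤ (2/μ) * G := by
      rw [hnrev]
      rw [← mul_le_mul_iff_right₀ (show (0:ℝ) < μ/2 by linarith)]
      have e1 : μ/2 * ((2/μ) * G) = G := by field_simp
      rw [e1]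
      exact hgap
    have hstep2 : (2/μ) * G ≤ (2 * ‖T‖ ^ 2 / (μ * lam)) * G := by
      apply mul_le_mul_of_nonneg_right _ hGnn
      rw [div_le_div_iff₀ (by positivity) (by positivity)]
      nlinarith
    linarith
  have hnn : (0:ℝ) ≤ 2 * ‖T‖ ^ 2 / (μ * lam) := by positivity
  calc ‖z - xopt‖ = Real.sqrt (‖z - xopt‖ ^ 2) := (Real.sqrt_sq (norm_nonneg _)).symm
    _ ≤ Real.sqrt ((2 * ‖T‖ ^ 2 / (μ * lam)) * G) := Real.sqrt_le_sqrt hd2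
    _ = Real.sqrt (2 * ‖T‖ ^ 2 / (μ * lam)) * Real.sqrt G := Real.sqrt_mul hnn _
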